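/- The three-qubit W state |W⟩ = (|001⟩+|010⟩+|100⟩)/√3 satisfies max over single-qubit unit vectors |σ⟩ of |⟨W|σ^{⊗3}⟩|² = 4/9, attained at |σ⟩ = √(2/3)|0⟩ + e^{iφ}√(1/3)|1⟩ for every φ; hence E_G(|W⟩) = log₂(9/4). -/

import Mathlib

open Finset

noncomputable def overlap {n : ℕ} (f g : (Fin n → Fin 2) → ℂ) : ℂ :=
  ∑ x : Fin n → Fin 2, (starRingEnd ℂ) (f x) * g x

noncomputable def symmPow (n : ℕ) (σ : Fin 2 → ℂ) : (Fin n → Fin 2) → ℂ :=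
  fun x => ∏ i, σ (x i)

noncomputable def prodState {n : ℕ} (σ : Fin n → Fin 2 → ℂ) : (Fin n → Fin 2) → ℂ :=
  fun x => ∏ j, σ j (x j)

def qubitUnit (σ : Fin 2 → ℂ) : Prop :=
  norm (σ 0) ^ 2 + norm (σ 1) ^ 2 = 1

noncomputable def dicke (n k : ℕ) : (Fin n → Fin 2) → ℂ :=
  fun x => if (∑ i, ((x i : ℕ))) = k then ((1 / Real.sqrt (n.choose k) : ℝ) : ℂ) else 0

noncomputable def bloch (θ ph : ℝ) : Fin 2 → ℂ :=
  fun i => if i = 0 then ((Real.cos (θ/2) : ℝ) : ℂ)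
           else Complex.exp (Complex.I * ph) * ((Real.sin (θ/2) : ℝ) : ℂ)

def isCPP (n : ℕ) (ψ : (Fin n → Fin 2) → ℂ) (σ : Fin 2 → ℂ) : Prop :=
  qubitUnit σ ∧ ∀ τ, qubitUnit τ →
    norm (overlap (symmPow n τ) ψ) ≤ norm (overlap (symmPow n σ) ψ)

lemma univ3 : (Finset.univ : Finset (Fin 3 → Fin 2)) =
  {![0,0,0], ![0,0,1], ![0,1,0], ![0,1,1], ![1,0,0], ![1,0,1], ![1,1,0], ![1,1,1]} := by decide

lemma key (σ : Fin 2 → ℂ) : overlap (symmPow 3 σ) (dicke 3 1)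
    = ((Real.sqrt 3 : ℂ))⁻¹ * (3 * ((starRingEnd ℂ) (σ 0))^2 * (starRingEnd ℂ) (σ 1)) := by
  rw [overlap, univ3]
  simp (config := { decide := true }) [symmPow, dicke, Fin.sum_univ_three, Fin.prod_univ_three,
    Finset.sum_insert, Finset.mem_insert]
  ring

lemma abs_key (σ : Fin 2 → ℂ) : norm (overlap (symmPow 3 σ) (dicke 3 1)) ^ 2
    = 3 * norm (σ 0) ^ 4 * norm (σ 1) ^ 2 := by
  rw [key]
  have h3 : Real.sqrt 3 ^ 2 = 3 := Real.sq_sqrt (by norm_num)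
  simp [norm_mul, norm_pow, norm_inv, Complex.norm_real, Real.norm_eq_abs, Complex.norm_conj,
    abs_of_nonneg (Real.sqrt_nonneg 3), mul_pow, inv_pow, h3]
  ring

lemma part1 : ∀ σ : Fin 2 → ℂ, qubitUnit σ →
    norm (overlap (symmPow 3 σ) (dicke 3 1)) ^ 2 ≤ 4 / 9 := by
  intro σ hσ
  rw [abs_key]
  set a := norm (σ 0) ^ 2 with ha
  have hq : norm (σ 0) ^ 2 + norm (σ 1) ^ 2 = 1 := hσ
  have hb : norm (σ 1) ^ 2 = 1 - a := by rw [ha]; linarith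
  have ha0 : 0 ≤ a := by positivity
  have h4 : norm (σ 0) ^ 4 = a ^ 2 := by ring
  rw [h4, hb]
  nlinarith [sq_nonneg (a - 2/3), mul_nonneg (sq_nonneg (a - 2/3)) ha0]

lemma part2 : ∀ ph : ℝ,
    norm (overlap (symmPow 3
      (fun i => if i = 0 then ((Real.sqrt (2/3) : ℝ) : ℂ)
                else Complex.exp (Complex.I * ph) * ((Real.sqrt (1/3) : ℝ) : ℂ)))
      (dicke 3 1)) ^ 2 = 4 / 9 := by
  intro ph
  rw [abs_key]
  have h0 : norm ((Real.sqrt (2/3) : ℝ) : ℂ) ^ 2 = 2/3 := by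
    rw [Complex.norm_real, Real.norm_eq_abs, abs_of_nonneg (Real.sqrt_nonneg _), Real.sq_sqrt (by norm_num)]
  have h1 : norm (Complex.exp (Complex.I * ph) * ((Real.sqrt (1/3) : ℝ) : ℂ)) ^ 2 = 1/3 := by
    rw [norm_mul, Complex.norm_exp]
    simp [Complex.norm_real, Real.norm_eq_abs, abs_of_nonneg (Real.sqrt_nonneg _)]
  have e0 : (if (0:Fin 2) = 0 then ((Real.sqrt (2/3) : ℝ) : ℂ)
      else Complex.exp (Complex.I * ph) * ((Real.sqrt (1/3) : ℝ) : ℂ)) = ((Real.sqrt (2/3) : ℝ) : ℂ) := rfl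
  have e1 : (if (1:Fin 2) = 0 then ((Real.sqrt (2/3) : ℝ) : ℂ)
      else Complex.exp (Complex.I * ph) * ((Real.sqrt (1/3) : ℝ) : ℂ))
      = Complex.exp (Complex.I * ph) * ((Real.sqrt (1/3) : ℝ) : ℂ) := rfl
  rw [e0, e1]
  have : norm ((Real.sqrt (2/3) : ℝ) : ℂ) ^ 4
      = (norm ((Real.sqrt (2/3) : ℝ) : ℂ) ^ 2) ^ 2 := by ring
  rw [this, h0, h1]; norm_num

lemma qunit : qubitUnit (fun i => if i = 0 then ((Real.sqrt (2/3) : ℝ) : ℂ)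
    else Complex.exp (Complex.I * (0:ℝ)) * ((Real.sqrt (1/3) : ℝ) : ℂ)) := by
  unfold qubitUnit
  beta_reduce
  have e0 : (if (0:Fin 2) = 0 then ((Real.sqrt (2/3) : ℝ) : ℂ)
      else Complex.exp (Complex.I * (0:ℝ)) * ((Real.sqrt (1/3) : ℝ) : ℂ)) = ((Real.sqrt (2/3) : ℝ) : ℂ) := rfl
  have e1 : (if (1:Fin 2) = 0 then ((Real.sqrt (2/3) : ℝ) : ℂ)
      else Complex.exp (Complex.I * (0:ℝ)) * ((Real.sqrt (1/3) : ℝ) : ℂ))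
      = Complex.exp (Complex.I * (0:ℝ)) * ((Real.sqrt (1/3) : ℝ) : ℂ) := rfl
  rw [e0, e1, Complex.ofReal_zero, mul_zero, Complex.exp_zero, one_mul]
  rw [Complex.norm_real, Complex.norm_real, Real.norm_eq_abs, Real.norm_eq_abs, abs_of_nonneg (Real.sqrt_nonneg _),
    abs_of_nonneg (Real.sqrt_nonneg _), Real.sq_sqrt (by norm_num), Real.sq_sqrt (by norm_num)]
  norm_num

theorem w_state_geometric_measure :
    (∀ σ : Fin 2 → ℂ, qubitUnit σ →
      norm (overlap (symmPow 3 σ) (dicke 3 1)) ^ 2 ≤ 4 / 9) ∧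
    (∀ ph : ℝ,
      norm (overlap (symmPow 3
        (fun i => if i = 0 then ((Real.sqrt (2/3) : ℝ) : ℂ)
                  else Complex.exp (Complex.I * ph) * ((Real.sqrt (1/3) : ℝ) : ℂ)))
        (dicke 3 1)) ^ 2 = 4 / 9) ∧
    - Real.logb 2 (sSup {a : ℝ | ∃ σ : Fin 2 → ℂ, qubitUnit σ ∧
        a = norm (overlap (symmPow 3 σ) (dicke 3 1)) ^ 2})
      = Real.logb 2 (9 / 4) := by
  refine ⟨part1, part2, ?_⟩
  have hmem : (4/9 : ℝ) ∈ {a : ℝ | ∃ σ : Fin 2 → ℂ, qubitUnit σ ∧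
      a = norm (overlap (symmPow 3 σ) (dicke 3 1)) ^ 2} :=
    ⟨_, qunit, (part2 0).symm⟩
  have hsup : sSup {a : ℝ | ∃ σ : Fin 2 → ℂ, qubitUnit σ ∧
      a = norm (overlap (symmPow 3 σ) (dicke 3 1)) ^ 2} = 4/9 := by
    apply le_antisymm
    · exact csSup_le ⟨_, hmem⟩ (by rintro a ⟨σ, hσ, rfl⟩; exact part1 σ hσ)
    · exact le_csSup ⟨4/9, by rintro a ⟨σ, hσ, rfl⟩; exact part1 σ hσ⟩ hmem
  rw [hsup, show (4/9 : ℝ) = (9/4)⁻¹ by norm_num, Real.logb_inv, neg_neg]
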